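/- Let (N,v) be a game, C a feasible collection (X_C(v) ≠ ∅), and x ∈ X_C(v). Then ζ(x) ≠ ∅ if and only if there exists a coalition S ∈ C such that the collection C ∪ { {i} : i ∈ S } contains no balanced subcollection on N (i.e., is unbalanced). -/

import Mathlib

open Finset
open scoped InnerProductSpace

section Cone

variable {E : Type*} [NormedAddCommGroup E] [InnerProductSpace ℝ E] [FiniteDimensional ℝ E]
variable {ι : Type*} [DecidableEq ι]

/-- membership in the cone generated by `f a`, `a ∈ A`. -/
def InConeIdx (A : Finset ι) (f : ι → E) (v : E) : Prop :=
  ∃ c : ι → ℝ, (∀ a, 0 ≤ c a) ∧ v = ∑ a ∈ A, c a • f a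

def IndepIdx (A : Finset ι) (f : ι → E) : Prop :=
  ∀ d : ι → ℝ, ∑ a ∈ A, d a • f a = 0 → ∀ a ∈ A, d a = 0

lemma inConeIdx_zero (A : Finset ι) (f : ι → E) : InConeIdx A f 0 :=
  ⟨0, fun _ => le_refl 0, by simp⟩

lemma InConeIdx.mono {A B : Finset ι} {f : ι → E} {v : E} (hAB : A ⊆ B)
    (h : InConeIdx A f v) : InConeIdx B f v := by
  classical
  obtain ⟨c, hc, hv⟩ := h
  refine ⟨fun a => if a ∈ A then c a else 0, fun a => by dsimp only; split <;> simp [hc], ?_⟩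
  rw [← Finset.sum_subset hAB (fun a _ ha => by simp [ha])]
  rw [hv]
  exact Finset.sum_congr rfl fun a ha => by simp [ha]

lemma reduceStep {f : ι → E} {v : E} {A : Finset ι} {c d : ι → ℝ}
    (hc : ∀ a, 0 ≤ c a)
    (hd : ∑ a ∈ A, d a • f a = 0) {a1 : ι} (ha1 : a1 ∈ A) (hda1 : 0 < d a1)
    (hv : v = ∑ a ∈ A, c a • f a) :
    ∃ a0 ∈ A, InConeIdx (A.erase a0) f v := by
  classical
  obtain ⟨a0, ha0mem, ha0min⟩ :=
    (A.filter fun a => 0 < d a).exists_min_image (fun a => c a / d a)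
      ⟨a1, Finset.mem_filter.2 ⟨ha1, hda1⟩⟩
  rw [Finset.mem_filter] at ha0mem
  obtain ⟨ha0A, hda0⟩ := ha0mem
  set t := c a0 / d a0 with ht
  have htnn : 0 ≤ t := div_nonneg (hc a0) hda0.le
  have hkey : ∀ a ∈ A, 0 ≤ c a - t * d a := by
    intro a ha
    by_cases hda : 0 < d a
    · have h1 := ha0min a (Finset.mem_filter.2 ⟨ha, hda⟩)
      have h2 : t * d a ≤ (c a / d a) * d a := mul_le_mul_of_nonneg_right h1 hda.le
      rw [div_mul_cancel₀ _ (ne_of_gt hda)] at h2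
      linarith
    · push_neg at hda
      have : t * d a ≤ 0 := mul_nonpos_of_nonneg_of_nonpos htnn hda
      linarith [hc a]
  have hsum : ∑ a ∈ A, (c a - t * d a) • f a = v := by
    simp only [sub_smul, Finset.sum_sub_distrib, mul_smul, ← Finset.smul_sum, hd, smul_zero,
      sub_zero, hv]
  have h00 : c a0 - t * d a0 = 0 := by
    rw [ht, div_mul_cancel₀ _ (ne_of_gt hda0), sub_self]
  refine ⟨a0, ha0A, ⟨fun a => if a ∈ A then c a - t * d a else 0, ?_, ?_⟩⟩
  · intro a; dsimp only; split
    · exact hkey a ‹_›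
    · exact le_refl 0
  · have : ∑ a ∈ A.erase a0, (if a ∈ A then c a - t * d a else 0) • f a
        = ∑ a ∈ A, (c a - t * d a) • f a := by
      rw [← Finset.add_sum_erase A (fun a => (c a - t * d a) • f a) ha0A, h00, zero_smul, zero_add]
      exact Finset.sum_congr rfl fun a ha => by rw [if_pos (Finset.mem_of_mem_erase ha)]
    dsimp only
    rw [this, hsum]

lemma caratheodoryCone {f : ι → E} {v : E} (A : Finset ι) :
    InConeIdx A f v → ∃ B, B ⊆ A ∧ IndepIdx B f ∧ InConeIdx B f v := by
  classical
  induction A using Finset.strongInduction with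
  | _ A ih =>
    rintro ⟨c, hc, hv⟩
    by_cases hind : IndepIdx A f
    · exact ⟨A, Finset.Subset.refl A, hind, c, hc, hv⟩
    · unfold IndepIdx at hind
      push_neg at hind
      obtain ⟨d, hd, a1, ha1, hda1⟩ := hind
      have hstep : ∃ a0 ∈ A, InConeIdx (A.erase a0) f v := by
        rcases hda1.lt_or_gt with hneg | hpos
        · refine reduceStep hc (d := -d) ?_ ha1 (by simpa using hneg) hv
          simp only [Pi.neg_apply, neg_smul, Finset.sum_neg_distrib, hd, neg_zero]
        · exact reduceStep hc hd ha1 hpos hv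
      obtain ⟨a0, ha0, hmem⟩ := hstep
      obtain ⟨B, hB1, hB2, hB3⟩ := ih _ (Finset.erase_ssubset ha0) hmem
      exact ⟨B, hB1.trans (Finset.erase_subset _ _), hB2, hB3⟩

end Cone

section Cone2

variable {E : Type*} [NormedAddCommGroup E] [InnerProductSpace ℝ E] [FiniteDimensional ℝ E]
variable {ι : Type*} [DecidableEq ι]

lemma isClosed_inConeIdx_of_indep {f : ι → E} {A : Finset ι} (hA : IndepIdx A f) :
    IsClosed {v : E | InConeIdx A f v} := by
  classical
  let L : ({a // a ∈ A} → ℝ) →ₗ[ℝ] E :=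
    { toFun := fun c => ∑ a ∈ A.attach, c a • f a.1
      map_add' := fun c d => by simp [add_smul, Finset.sum_add_distrib]
      map_smul' := fun r c => by simp [mul_smul, Finset.smul_sum] }
  have e1 : ∀ c : {a // a ∈ A} → ℝ,
      ∑ a ∈ A, (if h : a ∈ A then c ⟨a, h⟩ else 0) • f a = L c := by
    intro c
    rw [← Finset.sum_attach A (fun a => (if h : a ∈ A then c ⟨a, h⟩ else 0) • f a)]
    exact Finset.sum_congr rfl fun a _ => by rw [dif_pos a.2]
  have hker : LinearMap.ker L = ⊥ := by
    rw [LinearMap.ker_eq_bot']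
    intro c hLc
    have h0 : ∑ a ∈ A, (fun a => if h : a ∈ A then c ⟨a, h⟩ else 0) a • f a = 0 := by
      dsimp only
      rw [e1 c, hLc]
    have h1 := hA _ h0
    funext a
    have := h1 a.1 a.2
    simpa [a.2] using this
  have hemb := LinearMap.isClosedEmbedding_of_injective hker
  have horth : IsClosed {c : {a // a ∈ A} → ℝ | ∀ a, 0 ≤ c a} := by
    have : {c : {a // a ∈ A} → ℝ | ∀ a, 0 ≤ c a} = ⋂ a, {c | 0 ≤ c a} := by
      ext; simp [Set.mem_iInter]
    rw [this]
    exact isClosed_iInter fun a => isClosed_le continuous_const (continuous_apply a)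
  have himg : {v : E | InConeIdx A f v} = L '' {c | ∀ a, 0 ≤ c a} := by
    ext v
    constructor
    · rintro ⟨c, hc, hv⟩
      refine ⟨fun a => c a.1, fun a => hc a.1, ?_⟩
      show ∑ a ∈ A.attach, c a.1 • f a.1 = v
      rw [hv, ← Finset.sum_attach A (fun a => c a • f a)]
    · rintro ⟨c, hc, hv⟩
      refine ⟨fun a => if h : a ∈ A then c ⟨a, h⟩ else 0, fun a => ?_, ?_⟩
      · dsimp only; split
        · exact hc _
        · exact le_refl 0
      · dsimp only
        rw [e1 c, hv]
  rw [himg]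
  exact hemb.isClosedMap _ horth

lemma isClosed_inConeIdx (A : Finset ι) (f : ι → E) :
    IsClosed {v : E | InConeIdx A f v} := by
  classical
  have : {v : E | InConeIdx A f v} =
      ⋃ B ∈ {B : Finset ι | B ⊆ A ∧ IndepIdx B f}, {v | InConeIdx B f v} := by
    ext v
    simp only [Set.mem_setOf_eq, Set.mem_iUnion, exists_prop]
    constructor
    · intro h
      obtain ⟨B, hB1, hB2, hB3⟩ := caratheodoryCone A h
      exact ⟨B, ⟨hB1, hB2⟩, hB3⟩
    · rintro ⟨B, hB, hv⟩
      exact hv.mono hB.1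
  rw [this]
  refine Set.Finite.isClosed_biUnion ?_ ?_
  · exact (A.powerset.finite_toSet).subset fun B hB => by
      simpa [Finset.mem_powerset] using hB.1
  · exact fun B hB => isClosed_inConeIdx_of_indep hB.2

lemma farkas_alt [CompleteSpace E] (A : Finset ι) (f : ι → E) (b : E) :
    InConeIdx A f b ∨ ∃ y : E, (∀ a ∈ A, 0 ≤ ⟪f a, y⟫_ℝ) ∧ ⟪b, y⟫_ℝ < 0 := by
  classical
  by_cases hb : InConeIdx A f b
  · exact Or.inl hb
  right
  let K : ConvexCone ℝ E :=
    { carrier := {v | InConeIdx A f v}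
      smul_mem' := by
        rintro t ht v ⟨c, hc, hv⟩
        refine ⟨fun a => t * c a, fun a => mul_nonneg ht.le (hc a), ?_⟩
        rw [hv, Finset.smul_sum]
        exact Finset.sum_congr rfl fun a _ => (mul_smul t (c a) (f a)).symm
      add_mem' := by
        rintro v ⟨c, hc, hv⟩ u ⟨e, he, hu⟩
        exact ⟨c + e, fun a => add_nonneg (hc a) (he a), by
          simp [hv, hu, add_smul, Finset.sum_add_distrib]⟩ }
  obtain ⟨y, hy1, hy2⟩ := ProperCone.hyperplane_separation'
      (C := ⟨K.toPointedCone (inConeIdx_zero A f), isClosed_inConeIdx A f⟩) hb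
  refine ⟨y, fun a ha => hy1 (f a) ?_, hy2⟩
  refine ⟨fun a' => if a' = a then 1 else 0, fun a' => by by_cases h : a' = a <;> simp [h], ?_⟩
  have : ∀ a' ∈ A, (if a' = a then (1:ℝ) else 0) • f a' = if a' = a then f a' else 0 :=
    fun a' _ => by split <;> simp
  rw [Finset.sum_congr rfl this, Finset.sum_ite_eq' A a f, if_pos ha]

end Cone2


variable {α : Type*} [Fintype α] [DecidableEq α]

/-- Sum of the payments of the players in coalition `S`. -/
def coalSum (x : α → ℝ) (S : Finset α) : ℝ := ∑ i ∈ S, x i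

/-- `B` is a balanced collection on `M` with weights `w`. -/
def IsBalancedOn (M : Finset α) (B : Finset (Finset α)) (w : Finset α → ℝ) : Prop :=
  (∀ S ∈ B, S.Nonempty ∧ S ⊆ M ∧ 0 < w S) ∧
  (∀ i ∈ M, ∑ S ∈ B.filter (fun S => i ∈ S), w S = 1)

/-- The game `v` is balanced. -/
def BalancedGame (v : Finset α → ℝ) : Prop :=
  ∀ B w, IsBalancedOn (univ : Finset α) B w → ∑ S ∈ B, w S * v S ≤ v univ

/-- `x` is a preimputation of the game `v`. -/
def Preimp (v : Finset α → ℝ) (x : α → ℝ) : Prop := coalSum x univ = v univ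

/-- `y` dominates `x` via the coalition `S`. -/
def Dominates (v : Finset α → ℝ) (y x : α → ℝ) (S : Finset α) : Prop :=
  coalSum y S ≤ v S ∧ ∀ i ∈ S, x i < y i

/-- `x` belongs to the core of the game `v`. -/
def InCore (v : Finset α → ℝ) (x : α → ℝ) : Prop :=
  Preimp v x ∧ ∀ S : Finset α, S.Nonempty → v S ≤ coalSum x S

/-- The collection of coalitions unsatisfied at `x`. -/
def phi (v : Finset α → ℝ) (x : α → ℝ) : Set (Finset α) :=
  {S | S.Nonempty ∧ coalSum x S < v S}

/-- The domination cone of `x` with respect to `S`. -/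
def domCone (v : Finset α → ℝ) (S : Finset α) (x : α → ℝ) : Set (α → ℝ) :=
  {y | Preimp v y ∧ ∀ i ∈ S, x i < y i}

/-- The augmentation cone of `x`. -/
def Aug (v : Finset α → ℝ) (x : α → ℝ) : Set (α → ℝ) :=
  {y | Preimp v y ∧ ∀ S ∈ phi v x, coalSum x S ≤ coalSum y S}

def zeta (v : Finset α → ℝ) (x : α → ℝ) : Set (α → ℝ) :=
  Aug v x ∩ ⋃ S ∈ phi v x, domCone v S x

/-- The indicator vector of a coalition. -/
def indVec (T : Finset α) : EuclideanSpace ℝ α := WithLp.toLp 2 (fun i => if i ∈ T then 1 else 0)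

lemma inner_indVec (T : Finset α) (y : EuclideanSpace ℝ α) :
    ⟪indVec T, y⟫_ℝ = ∑ i ∈ T, y i := by
  simp only [PiLp.inner_apply, RCLike.inner_apply, conj_trivial, indVec]
  simp only [PiLp.toLp_apply, ite_mul, one_mul, zero_mul, mul_ite, mul_one, mul_zero]
  rw [Finset.sum_ite_mem, Finset.univ_inter]

lemma inner_indVec_single (T : Finset α) (k : α) :
    ⟪indVec T, indVec ({k} : Finset α)⟫_ℝ = if k ∈ T then (1:ℝ) else 0 := by
  rw [inner_indVec]
  have h : ∀ i ∈ T, (indVec ({k} : Finset α)) i = if i = k then (1:ℝ) else 0 := by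
    intro i _
    simp [indVec]
  rw [Finset.sum_congr rfl h, Finset.sum_ite_eq' T k (fun _ => (1:ℝ))]

lemma balanced_sum {B : Finset (Finset α)} {w : Finset α → ℝ}
    (hb : ∀ i ∈ (univ : Finset α), ∑ S ∈ B.filter (fun S => i ∈ S), w S = 1) (z : α → ℝ) :
    ∑ T ∈ B, w T * coalSum z T = coalSum z univ := by
  classical
  unfold coalSum
  calc ∑ T ∈ B, w T * ∑ i ∈ T, z i
      = ∑ T ∈ B, ∑ i ∈ (univ : Finset α), (if i ∈ T then w T * z i else 0) := by
        refine Finset.sum_congr rfl fun T _ => ?_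
        rw [Finset.sum_ite_mem, Finset.univ_inter, Finset.mul_sum]
    _ = ∑ i ∈ (univ : Finset α), ∑ T ∈ B, (if i ∈ T then w T * z i else 0) := Finset.sum_comm
    _ = ∑ i ∈ (univ : Finset α), (∑ T ∈ B.filter (fun S => i ∈ S), w T) * z i := by
        refine Finset.sum_congr rfl fun i _ => ?_
        rw [Finset.sum_mul, Finset.sum_filter]
    _ = ∑ i ∈ (univ : Finset α), z i := by
        refine Finset.sum_congr rfl fun i hi => ?_
        rw [hb i hi, one_mul]

lemma no_balanced_sub {v : Finset α → ℝ} {x : α → ℝ} (hbal : BalancedGame v)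
    (hx : Preimp v x) {B : Finset (Finset α)} {w : Finset α → ℝ}
    (hB : ∀ T ∈ B, T ∈ phi v x) (hne : B.Nonempty) (hbw : IsBalancedOn univ B w) : False := by
  have h1 := hbal B w hbw
  have h2 : ∑ T ∈ B, w T * coalSum x T = coalSum x univ := balanced_sum hbw.2 x
  have h3 : ∑ T ∈ B, w T * coalSum x T < ∑ T ∈ B, w T * v T := by
    refine Finset.sum_lt_sum_of_nonempty hne fun T hT => ?_
    exact mul_lt_mul_of_pos_left (hB T hT).2 ((hbw.1 T hT).2.2)
  rw [h2, hx] at h3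
  linarith


theorem stmt_11 (v : Finset α → ℝ) (hbal : BalancedGame v)
    (C : Set (Finset α)) (x : α → ℝ) (hx : Preimp v x) (hxC : phi v x = C) :
    (zeta v x).Nonempty ↔
      ∃ S ∈ C, ¬ ∃ (B : Finset (Finset α)) (w : Finset α → ℝ),
        (↑B : Set (Finset α)) ⊆ C ∪ ((fun i => ({i} : Finset α)) '' ↑S) ∧
        B.Nonempty ∧ IsBalancedOn (univ : Finset α) B w := by
  classical
  subst hxC
  constructor
  · rintro ⟨y, ⟨hyP, hyAug⟩, hyU⟩
    rw [Set.mem_iUnion₂] at hyU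
    obtain ⟨S, hS, hyP2, hyD⟩ := hyU
    refine ⟨S, hS, ?_⟩
    rintro ⟨B, w, hBsub, hBne, hBbal⟩
    have key : ∑ T ∈ B, w T * (coalSum y T - coalSum x T) = 0 := by
      have h1 := balanced_sum hBbal.2 y
      have h2 := balanced_sum hBbal.2 x
      have h3 : coalSum y univ = coalSum x univ := by rw [hyP, hx]
      simp only [mul_sub]
      rw [Finset.sum_sub_distrib, h1, h2, h3, sub_self]
    have hnn : ∀ T ∈ B, 0 ≤ w T * (coalSum y T - coalSum x T) := by
      intro T hT
      have hw := (hBbal.1 T hT).2.2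
      rcases hBsub (Finset.mem_coe.2 hT) with h | ⟨j, hj, hTj⟩
      · exact mul_nonneg hw.le (sub_nonneg.2 (hyAug T h))
      · have hyx := hyD j (Finset.mem_coe.1 hj)
        have hc : coalSum y T - coalSum x T = y j - x j := by
          rw [← hTj]; simp [coalSum]
        rw [hc]
        exact mul_nonneg hw.le (by linarith)
    by_cases hsing : ∃ T ∈ B, ∃ j ∈ S, ({j} : Finset α) = T
    · obtain ⟨T, hT, j, hj, hTj⟩ := hsing
      have hz := (Finset.sum_eq_zero_iff_of_nonneg hnn).1 key T hT
      have hw := (hBbal.1 T hT).2.2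
      have hyx := hyD j hj
      have hc : coalSum y T - coalSum x T = y j - x j := by
        rw [← hTj]; simp [coalSum]
      rw [hc] at hz
      nlinarith
    · push_neg at hsing
      refine no_balanced_sub hbal hx (B := B) (w := w) ?_ hBne hBbal
      intro T hT
      rcases hBsub (Finset.mem_coe.2 hT) with h | ⟨j, hj, hTj⟩
      · exact h
      · exact absurd hTj (hsing T hT j (Finset.mem_coe.1 hj))
  · rintro ⟨S, hS, hnb⟩
    set D0 : Finset (Finset α) :=
      (univ.filter (· ∈ phi v x)) ∪ S.image (fun j => ({j} : Finset α)) with hD0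
    set fI : Finset α ⊕ Bool → EuclideanSpace ℝ α :=
      Sum.elim indVec (fun b => if b then indVec univ else -indVec univ) with hfI
    set A : Finset (Finset α ⊕ Bool) :=
      D0.image Sum.inl ∪ {Sum.inr true, Sum.inr false} with hA
    have hmemA1 : ∀ T ∈ D0, Sum.inl T ∈ A := by
      intro T hT
      rw [hA]
      exact Finset.mem_union_left _ (Finset.mem_image_of_mem _ hT)
    have hmemA2 : ∀ b : Bool, Sum.inr b ∈ A := by
      intro b
      rw [hA]
      refine Finset.mem_union_right _ ?_
      rcases b <;> simp
    have hphiD0 : ∀ T ∈ phi v x, T ∈ D0 := by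
      intro T hT
      rw [hD0]
      exact Finset.mem_union_left _ (Finset.mem_filter.2 ⟨Finset.mem_univ T, hT⟩)
    have hsingD0 : ∀ j ∈ S, ({j} : Finset α) ∈ D0 := by
      intro j hj
      rw [hD0]
      exact Finset.mem_union_right _ (Finset.mem_image_of_mem _ hj)
    have hz : ∀ i ∈ S, ∃ z : α → ℝ, (∑ k ∈ (univ : Finset α), z k) = 0 ∧
        (∀ T ∈ phi v x, 0 ≤ ∑ k ∈ T, z k) ∧ (∀ j ∈ S, 0 ≤ z j) ∧ 0 < z i := by
      intro i hi
      rcases farkas_alt A fI (-(indVec {i})) with hmem | ⟨y, hy1, hy2⟩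
      · exfalso
        obtain ⟨c, hc, hcb⟩ := hmem
        have hdisj : Disjoint (D0.image Sum.inl)
            ({Sum.inr true, Sum.inr false} : Finset (Finset α ⊕ Bool)) := by
          simp [Finset.disjoint_left]
        have hsplit : ∑ a ∈ A, c a • fI a
            = (∑ T ∈ D0, c (Sum.inl T) • indVec T)
              + (c (Sum.inr true) • indVec univ + c (Sum.inr false) • (-indVec univ)) := by
          rw [hA, Finset.sum_union hdisj,
            Finset.sum_image (fun _ _ _ _ h => Sum.inl.inj h), Finset.sum_pair (by simp)]
          simp [hfI]
        set lam : Finset α → ℝ :=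
          fun T => c (Sum.inl T) + (if T = ({i} : Finset α) then 1 else 0) with hlam
        have hlamnn : ∀ T, 0 ≤ lam T := by
          intro T
          rw [hlam]
          dsimp only
          have := hc (Sum.inl T)
          split <;> linarith
        have hiD0 : ({i} : Finset α) ∈ D0 := hsingD0 i hi
        set γ : ℝ := c (Sum.inr false) - c (Sum.inr true) with hγ
        have hvec : ∑ T ∈ D0, lam T • indVec T = γ • indVec univ := by
          have e2 : ∑ T ∈ D0, (if T = ({i} : Finset α) then (1:ℝ) else 0) • indVec T
              = indVec {i} := by
            have h' : ∀ T ∈ D0, (if T = ({i} : Finset α) then (1:ℝ) else 0) • indVec T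
                = if T = ({i} : Finset α) then indVec T else 0 := fun T _ => by split <;> simp
            rw [Finset.sum_congr rfl h', Finset.sum_ite_eq' D0 ({i} : Finset α) indVec,
              if_pos hiD0]
          have e3 : ∑ T ∈ D0, lam T • indVec T
              = (∑ T ∈ D0, c (Sum.inl T) • indVec T) + indVec {i} := by
            rw [← e2, ← Finset.sum_add_distrib]
            refine Finset.sum_congr rfl fun T _ => ?_
            rw [hlam]
            dsimp only
            rw [add_smul]
          rw [e3, hγ]
          rw [hsplit] at hcb
          have h4 : (∑ T ∈ D0, c (Sum.inl T) • indVec T)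
              = -(indVec {i}) - (c (Sum.inr true) • indVec univ
                  + c (Sum.inr false) • (-indVec univ)) := by
            rw [eq_sub_iff_add_eq, ← hcb]
          rw [h4]
          module
        have hcoord : ∀ k : α, ∑ T ∈ D0.filter (fun T => k ∈ T), lam T = γ := by
          intro k
          have h5 := congrArg (fun w : EuclideanSpace ℝ α => ⟪w, indVec ({k} : Finset α)⟫_ℝ) hvec
          rw [sum_inner, real_inner_smul_left, inner_indVec_single, if_pos (Finset.mem_univ k),
            mul_one] at h5
          rw [Finset.sum_filter, ← h5]
          refine Finset.sum_congr rfl fun T _ => ?_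
          rw [real_inner_smul_left, inner_indVec_single]
          split <;> ring
        have hγ1 : (1:ℝ) ≤ γ := by
          have h6 := hcoord i
          have h7 : lam ({i} : Finset α) ≤ ∑ T ∈ D0.filter (fun T => i ∈ T), lam T :=
            Finset.single_le_sum (fun T _ => hlamnn T)
              (Finset.mem_filter.2 ⟨hiD0, Finset.mem_singleton_self i⟩)
          have h8 : (1:ℝ) ≤ lam ({i} : Finset α) := by
            rw [hlam]
            dsimp only
            rw [if_pos rfl]
            linarith [hc (Sum.inl ({i} : Finset α))]
          linarith
        have hγ0 : (0:ℝ) < γ := by linarith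
        refine hnb ⟨D0.filter (fun T => lam T ≠ 0), fun T => lam T / γ, ?_, ?_, ?_, ?_⟩
        · intro T hT
          have hTD0 : T ∈ D0 := (Finset.mem_filter.1 (Finset.mem_coe.1 hT)).1
          rw [hD0, Finset.mem_union] at hTD0
          rcases hTD0 with h | h
          · exact Or.inl (Finset.mem_filter.1 h).2
          · obtain ⟨j, hj, hTj⟩ := Finset.mem_image.1 h
            exact Or.inr ⟨j, Finset.mem_coe.2 hj, hTj⟩
        · refine ⟨({i} : Finset α), Finset.mem_filter.2 ⟨hiD0, ?_⟩⟩
          have h8 : (1:ℝ) ≤ lam ({i} : Finset α) := by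
            rw [hlam]
            dsimp only
            rw [if_pos rfl]
            linarith [hc (Sum.inl ({i} : Finset α))]
          intro h
          rw [h] at h8
          linarith
        · intro T hT
          rw [Finset.mem_filter] at hT
          refine ⟨?_, Finset.subset_univ T, ?_⟩
          · have hTD0 := hT.1
            rw [hD0, Finset.mem_union] at hTD0
            rcases hTD0 with h | h
            · exact ((Finset.mem_filter.1 h).2).1
            · obtain ⟨j, _, hTj⟩ := Finset.mem_image.1 h
              rw [← hTj]
              exact Finset.singleton_nonempty j
          · exact div_pos (lt_of_le_of_ne (hlamnn T) (Ne.symm hT.2)) hγ0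
        · intro k _
          rw [← Finset.sum_div, Finset.filter_comm, Finset.sum_filter_ne_zero, hcoord k,
            div_self (ne_of_gt hγ0)]
      · refine ⟨fun k => y k, ?_, ?_, ?_, ?_⟩
        · have ht := hy1 _ (hmemA2 true)
          have hf := hy1 _ (hmemA2 false)
          simp only [hfI, Sum.elim_inr, if_true, if_false, Bool.cond_true] at ht hf
          rw [inner_indVec] at ht
          rw [if_neg (by simp), inner_neg_left, inner_indVec] at hf
          dsimp only
          linarith
        · intro T hT
          have h := hy1 _ (hmemA1 T (hphiD0 T hT))
          simp only [hfI, Sum.elim_inl] at h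
          rw [inner_indVec] at h
          exact h
        · intro j hj
          have h := hy1 _ (hmemA1 _ (hsingD0 j hj))
          simp only [hfI, Sum.elim_inl] at h
          rw [inner_indVec, Finset.sum_singleton] at h
          exact h
        · rw [inner_neg_left, inner_indVec, Finset.sum_singleton] at hy2
          dsimp only
          linarith
    choose! z hz1 hz2 hz3 hz4 using hz
    have hzsum : ∀ T : Finset α, coalSum (fun k => x k + ∑ j ∈ S, z j k) T
        = coalSum x T + ∑ j ∈ S, ∑ k ∈ T, z j k := by
      intro T
      unfold coalSum
      rw [Finset.sum_add_distrib, Finset.sum_comm]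
    have hP : Preimp v (fun k => x k + ∑ j ∈ S, z j k) := by
      unfold Preimp
      rw [hzsum]
      have h0 : ∑ j ∈ S, ∑ k ∈ (univ : Finset α), z j k = 0 :=
        Finset.sum_eq_zero fun j hj => hz1 j hj
      rw [h0, add_zero]
      exact hx
    refine ⟨fun k => x k + ∑ j ∈ S, z j k, ⟨⟨hP, ?_⟩, ?_⟩⟩
    · intro T hT
      rw [hzsum]
      have h0 : 0 ≤ ∑ j ∈ S, ∑ k ∈ T, z j k :=
        Finset.sum_nonneg fun j hj => hz2 j hj T hT
      linarith
    · rw [Set.mem_iUnion₂]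
      refine ⟨S, hS, hP, ?_⟩
      intro j hj
      have hpos : 0 < ∑ j' ∈ S, z j' j := by
        refine Finset.sum_pos' (fun j' hj' => hz3 j' hj' j hj) ⟨j, hj, hz4 j hj⟩
      dsimp only
      linarith
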